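/- Let $p_j(\omega) = 1/(1+\|\omega\|^2)^{s_j}$ on $\mathbb{R}^{d_j}$ with $s_j \ge s_{j-1}$, and let $W: \mathbb{R}^{d_{j-1}} \to \mathbb{R}^{d_j}$ be a linear map. Then $\sup_{\omega \in \mathcal{R}(W)} p_j(\omega)/p_{j-1}(W^\ast\omega) \le \max\{1, \|W\|^{2s_{j-1}}\}$, where the supremum is taken over the range $\mathcal{R}(W)$ of $W$. -/
import Mathlib


open Matrix

noncomputable def matOpNorm {m n : ℕ} (W : Matrix (Fin m) (Fin n) ℝ) : ℝ :=
  ‖LinearMap.toContinuousLinearMap (Matrix.toEuclideanLin W)‖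

/-- For `p_j(ω) = 1/(1+‖ω‖²)^{s_j}` with `s_j ≥ s_{j-1}` (and `s_j > d_j/2`), and a linear
map `W : ℝ^{d_{j-1}} → ℝ^{d_j}`, one has `p_j(ω)/p_{j-1}(W*ω) ≤ max {1, ‖W‖^{2 s_{j-1}}}`
for every `ω` in the range of `W`. -/
theorem p_ratio_le_opNorm_pow_injective {d0 d1 : ℕ} (s0 s1 : ℝ)
    (hs0 : (d0 : ℝ) / 2 < s0) (hs1 : (d1 : ℝ) / 2 < s1) (hss : s0 ≤ s1)
    (W : Matrix (Fin d1) (Fin d0) ℝ)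
    (p0 : EuclideanSpace ℝ (Fin d0) → ℝ) (p1 : EuclideanSpace ℝ (Fin d1) → ℝ)
    (hp0 : ∀ ω, p0 ω = 1 / (1 + ‖ω‖ ^ 2) ^ s0)
    (hp1 : ∀ ω, p1 ω = 1 / (1 + ‖ω‖ ^ 2) ^ s1) :
    ∀ ω ∈ LinearMap.range (Matrix.toEuclideanLin W),
      p1 ω / p0 (Matrix.toEuclideanLin Wᵀ ω) ≤ max 1 (matOpNorm W ^ (2 * s0)) := by
  intro ω hω
  have hs0pos : 0 < s0 := lt_of_le_of_lt (by positivity) hs0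
  set C : ℝ := matOpNorm W with hCdef
  have hC0 : 0 ≤ C := norm_nonneg _
  -- transpose has the same operator norm
  have hTnorm : ‖LinearMap.toContinuousLinearMap (Matrix.toEuclideanLin Wᵀ)‖ = C := by
    have h1 : (Wᵀ : Matrix (Fin d0) (Fin d1) ℝ) = Wᴴ := by
      ext i j; simp [Matrix.conjTranspose_apply]
    rw [h1, Matrix.toEuclideanLin_conjTranspose_eq_adjoint,
      LinearMap.adjoint_toContinuousLinearMap]
    exact ContinuousLinearMap.adjoint.norm_map _
  have hWT : ‖Matrix.toEuclideanLin Wᵀ ω‖ ≤ C * ‖ω‖ := by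
    have := (LinearMap.toContinuousLinearMap (Matrix.toEuclideanLin Wᵀ)).le_opNorm ω
    simpa [hTnorm] using this
  set A : ℝ := 1 + ‖ω‖ ^ 2 with hA
  set B : ℝ := 1 + ‖Matrix.toEuclideanLin Wᵀ ω‖ ^ 2 with hB
  have hA1 : (1 : ℝ) ≤ A := by rw [hA]; linarith [sq_nonneg ‖ω‖]
  have hB1 : (1 : ℝ) ≤ B := by rw [hB]; linarith [sq_nonneg ‖Matrix.toEuclideanLin Wᵀ ω‖]
  have hApos : 0 < A := lt_of_lt_of_le one_pos hA1
  have hBpos : 0 < B := lt_of_lt_of_le one_pos hB1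
  rw [hp0, hp1, hA.symm, hB.symm]
  have hApos' : 0 < A := lt_of_lt_of_le one_pos (by rw [hA]; linarith [sq_nonneg ‖ω‖])
  have hrw : 1 / A ^ s1 / (1 / B ^ s0) = B ^ s0 / A ^ s1 := by
    field_simp
  rw [hrw]
  have key : B ≤ max 1 (C ^ 2) * A := by
    have h2 : ‖Matrix.toEuclideanLin Wᵀ ω‖ ^ 2 ≤ (C * ‖ω‖) ^ 2 := by
      apply pow_le_pow_left₀ (norm_nonneg _) hWT
    have h3 : B ≤ 1 + C ^ 2 * ‖ω‖ ^ 2 := by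
      rw [hB]; nlinarith
    have h4 : (1 : ℝ) ≤ max 1 (C ^ 2) := le_max_left _ _
    have h5 : C ^ 2 ≤ max 1 (C ^ 2) := le_max_right _ _
    have h6 : 0 ≤ ‖ω‖ ^ 2 := by positivity
    calc B ≤ 1 + C ^ 2 * ‖ω‖ ^ 2 := h3
      _ ≤ max 1 (C ^ 2) + max 1 (C ^ 2) * ‖ω‖ ^ 2 := by nlinarith
      _ = max 1 (C ^ 2) * A := by rw [hA]; ring
  have hAs : A ^ s0 ≤ A ^ s1 := Real.rpow_le_rpow_of_exponent_le hA1 hss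
  have hA_s1pos : 0 < A ^ s1 := Real.rpow_pos_of_pos hApos s1
  have hA_s0pos : 0 < A ^ s0 := Real.rpow_pos_of_pos hApos s0
  rcases le_total C 1 with hC1 | hC1
  · -- C ≤ 1 : B ≤ A, ratio ≤ 1
    have hmax : max 1 (C ^ 2) = 1 := max_eq_left (pow_le_one₀ hC0 hC1)
    have hBA : B ≤ A := by rw [hmax, one_mul] at key; exact key
    have : B ^ s0 ≤ A ^ s1 :=
      le_trans (Real.rpow_le_rpow (le_of_lt hBpos) hBA (le_of_lt hs0pos)) hAs
    have h1 : B ^ s0 / A ^ s1 ≤ 1 := (div_le_one hA_s1pos).mpr this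
    exact le_trans h1 (le_max_left _ _)
  · -- 1 ≤ C
    have hone : (1:ℝ) ≤ C ^ 2 := one_le_pow₀ hC1
    have hmax : max 1 (C ^ 2) = C ^ 2 := max_eq_right hone
    have hBA : B ≤ C ^ 2 * A := by rw [hmax] at key; exact key
    have hC2 : (0:ℝ) < C ^ 2 := lt_of_lt_of_le one_pos hone
    have hBs : B ^ s0 ≤ (C ^ 2 * A) ^ s0 :=
      Real.rpow_le_rpow (le_of_lt hBpos) hBA (le_of_lt hs0pos)
    have hmul : (C ^ 2 * A) ^ s0 = C ^ (2 * s0) * A ^ s0 := by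
      rw [Real.mul_rpow (le_of_lt hC2) (le_of_lt hApos), ← Real.rpow_natCast C 2,
        ← Real.rpow_mul hC0]
      norm_num
    have h1 : B ^ s0 ≤ C ^ (2 * s0) * A ^ s1 := by
      have hCp : 0 ≤ C ^ (2 * s0) := Real.rpow_nonneg hC0 _
      calc B ^ s0 ≤ C ^ (2 * s0) * A ^ s0 := by rw [← hmul]; exact hBs
        _ ≤ C ^ (2 * s0) * A ^ s1 := by exact mul_le_mul_of_nonneg_left hAs hCp
    have h2 : B ^ s0 / A ^ s1 ≤ C ^ (2 * s0) := (div_le_iff₀ hA_s1pos).mpr h1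
    exact le_trans h2 (le_max_right _ _)
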